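/- arXiv:2411.15977 — 8 statements merged into one kernel-verified Lean document; each statement's English description precedes it below -/
import Mathlib

section
/- Let G be a group and A, C subgroups of G with A ∩ C = {1}. Let Γ := (A*C) ∩ (C*A) denote the set of decomposable elements (where A*C := {a*c : a ∈ A, c ∈ C}), and let A₀ := A ∩ N(C), where N(C) := {g ∈ G : g*C*g⁻¹ = C} is the normalizer of C. Then multiplication by A₀ preserves the set of decomposable elements: {a₀*γ : a₀ ∈ A₀, γ ∈ Γ} = Γ and {γ*a₀ : a₀ ∈ A₀, γ ∈ Γ} = Γ. -/
/-- Multiplication by `A₀ = A ∩ N(C)` preserves the set `Γ = (A*C) ∩ (C*A)` of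
decomposable elements (Proposition 2.2 (1)). -/
theorem stmt0 {G : Type*} [Group G] (A C : Subgroup G)
    (hAC : A ⊓ C = ⊥)
    (Γ : Set G)
    (hΓ : Γ = {g | ∃ a ∈ A, ∃ c ∈ C, g = a * c} ∩ {g | ∃ c ∈ C, ∃ a ∈ A, g = c * a})
    (A₀ : Subgroup G) (hA₀ : A₀ = A ⊓ Subgroup.normalizer (C : Set G)) :
    {g | ∃ a₀ ∈ A₀, ∃ γ ∈ Γ, g = a₀ * γ} = Γ ∧
    {g | ∃ a₀ ∈ A₀, ∃ γ ∈ Γ, g = γ * a₀} = Γ := by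
  subst hΓ hA₀
  constructor
  · ext g
    constructor
    · rintro ⟨a₀, ⟨ha₀A, ha₀N⟩, γ, ⟨⟨a, ha, c, hc, rfl⟩, ⟨c', hc', a', ha', h2⟩⟩, rfl⟩
      constructor
      · exact ⟨a₀ * a, mul_mem ha₀A ha, c, hc, by group⟩
      · refine ⟨a₀ * c' * a₀⁻¹, (Subgroup.mem_normalizer_iff.mp ha₀N c').mp hc',
          a₀ * a', mul_mem ha₀A ha', ?_⟩
        rw [h2]; group
    · intro hg
      exact ⟨1, one_mem _, g, hg, (one_mul g).symm⟩
  · ext g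
    constructor
    · rintro ⟨a₀, ⟨ha₀A, ha₀N⟩, γ, ⟨⟨a, ha, c, hc, rfl⟩, ⟨c', hc', a', ha', h2⟩⟩, rfl⟩
      constructor
      · refine ⟨a * a₀, mul_mem ha ha₀A, a₀⁻¹ * c * a₀, ?_, by group⟩
        have := (Subgroup.mem_normalizer_iff.mp (inv_mem ha₀N) c).mp hc
        simpa [mul_assoc] using this
      · exact ⟨c', hc', a' * a₀, mul_mem ha' ha₀A, by rw [h2]; group⟩
    · intro hg
      exact ⟨1, one_mem _, g, hg, (mul_one g).symm⟩
end

section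
/- Let G be a group, A, C subgroups with A ∩ C = {1}, Γ := (A*C) ∩ (C*A), and A₀ := A ∩ N(C). For γ ∈ Γ define s_A(γ) := c_L(γ)⁻¹ * a_L(γ). Then: (i) s_A(γ) = a_R(γ) * c_R(γ)⁻¹; (ii) s_A(γ) ∈ Γ; and (iii) for every a₀ ∈ A₀ (so that a₀*γ ∈ Γ and γ*a₀ ∈ Γ), one has s_A(a₀*γ) = a₀ * s_A(γ) and s_A(γ*a₀) = s_A(γ) * a₀. -/
private lemma uniq_dec {G : Type*} [Group G] (A C : Subgroup G) (hAC : A ⊓ C = ⊥)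
    {a a' c c' : G} (ha : a ∈ A) (ha' : a' ∈ A) (hc : c ∈ C) (hc' : c' ∈ C)
    (heq : a * c = a' * c') : a = a' ∧ c = c' := by
  have h1 : a'⁻¹ * a = c' * c⁻¹ := by
    rw [inv_mul_eq_iff_eq_mul, ← mul_assoc, ← heq, mul_assoc, mul_inv_cancel, mul_one]
  have h2 : a'⁻¹ * a ∈ A ⊓ C := by
    exact ⟨A.mul_mem (A.inv_mem ha') ha, by rw [h1]; exact C.mul_mem hc' (C.inv_mem hc)⟩
  rw [hAC, Subgroup.mem_bot, inv_mul_eq_one] at h2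
  refine ⟨h2.symm, ?_⟩
  have := heq
  rw [h2] at this
  exact mul_left_cancel this

/-- For a trivially intersecting pair of subgroups `A, C ⊆ G` with set of decomposable
elements `Γ = (A*C) ∩ (C*A)`, unique decompositions `γ = aL γ * cR γ = cL γ * aR γ`, and
`s_A γ := (cL γ)⁻¹ * aL γ`, one has: (i) `s_A γ = aR γ * (cR γ)⁻¹`; (ii) `s_A γ ∈ Γ`;
(iii) for `a₀ ∈ A₀ = A ∩ N(C)` (so that `a₀*γ, γ*a₀ ∈ Γ`),
`s_A (a₀*γ) = a₀ * s_A γ` and `s_A (γ*a₀) = s_A γ * a₀`. -/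
theorem stmt1 {G : Type*} [Group G] (A C : Subgroup G)
    (hAC : A ⊓ C = ⊥)
    (Γ : Set G)
    (hΓ : Γ = {g | ∃ a ∈ A, ∃ c ∈ C, g = a * c} ∩ {g | ∃ c ∈ C, ∃ a ∈ A, g = c * a})
    (aL aR cL cR : G → G)
    (hdecL : ∀ γ ∈ Γ, aL γ ∈ A ∧ cR γ ∈ C ∧ γ = aL γ * cR γ)
    (hdecR : ∀ γ ∈ Γ, cL γ ∈ C ∧ aR γ ∈ A ∧ γ = cL γ * aR γ)
    (sA : G → G) (hsA : ∀ γ, sA γ = (cL γ)⁻¹ * aL γ) :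
    (∀ γ ∈ Γ, sA γ = aR γ * (cR γ)⁻¹) ∧
    (∀ γ ∈ Γ, sA γ ∈ Γ) ∧
    (∀ γ ∈ Γ, ∀ a₀ ∈ A ⊓ Subgroup.normalizer (C : Set G),
      a₀ * γ ∈ Γ ∧ γ * a₀ ∈ Γ ∧ sA (a₀ * γ) = a₀ * sA γ ∧ sA (γ * a₀) = sA γ * a₀) := by
  have key : ∀ γ ∈ Γ, sA γ = aR γ * (cR γ)⁻¹ := by
    intro γ hγ
    obtain ⟨haL, hcR, hL⟩ := hdecL γ hγ
    obtain ⟨hcL, haR, hR⟩ := hdecR γ hγ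
    have h : aL γ * cR γ = cL γ * aR γ := by rw [← hL, ← hR]
    rw [hsA, inv_mul_eq_iff_eq_mul, ← mul_assoc, ← h, mul_assoc, mul_inv_cancel, mul_one]
  refine ⟨key, ?_, ?_⟩
  · intro γ hγ
    obtain ⟨haL, hcR, hL⟩ := hdecL γ hγ
    obtain ⟨hcL, haR, hR⟩ := hdecR γ hγ
    rw [hΓ]
    exact ⟨⟨aR γ, haR, (cR γ)⁻¹, C.inv_mem hcR, key γ hγ⟩,
      ⟨(cL γ)⁻¹, C.inv_mem hcL, aL γ, haL, hsA γ⟩⟩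
  · intro γ hγ a₀ ha₀
    obtain ⟨ha₀A, ha₀N⟩ := ha₀
    obtain ⟨haL, hcR, hL⟩ := hdecL γ hγ
    obtain ⟨hcL, haR, hR⟩ := hdecR γ hγ
    have hconj : ∀ c ∈ C, a₀ * c * a₀⁻¹ ∈ C := fun c hc =>
      (Subgroup.mem_normalizer_iff.mp ha₀N c).mp hc
    have hconj' : ∀ c ∈ C, a₀⁻¹ * c * a₀ ∈ C := by
      intro c hc
      have := (Subgroup.mem_normalizer_iff.mp ((Subgroup.normalizer (C : Set G)).inv_mem ha₀N) c).mp hc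
      simpa using this
    have hmem1 : a₀ * γ ∈ Γ := by
      rw [hΓ]
      refine ⟨⟨a₀ * aL γ, A.mul_mem ha₀A haL, cR γ, hcR, by rw [mul_assoc, ← hL]⟩,
        ⟨a₀ * cL γ * a₀⁻¹, hconj _ hcL, a₀ * aR γ, A.mul_mem ha₀A haR, by nth_rewrite 1 [hR]; group⟩⟩
    have hmem2 : γ * a₀ ∈ Γ := by
      rw [hΓ]
      refine ⟨⟨aL γ * a₀, A.mul_mem haL ha₀A, a₀⁻¹ * cR γ * a₀, hconj' _ hcR, by nth_rewrite 1 [hL]; group⟩,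
        ⟨cL γ, hcL, aR γ * a₀, A.mul_mem haR ha₀A, by rw [← mul_assoc, ← hR]⟩⟩
    refine ⟨hmem1, hmem2, ?_, ?_⟩
    · obtain ⟨hcL', haR', hR'⟩ := hdecR (a₀ * γ) hmem1
      obtain ⟨haL', hcR', hL'⟩ := hdecL (a₀ * γ) hmem1
      have e1 : a₀ * cL γ * a₀⁻¹ * (a₀ * aR γ) = cL (a₀*γ) * aR (a₀*γ) := by
        rw [← hR']; nth_rewrite 3 [hR]; group
      obtain ⟨ec, _⟩ := uniq_dec C A (by rw [inf_comm]; exact hAC) (hconj _ hcL) hcL'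
        (A.mul_mem ha₀A haR) haR' e1
      have e2 : (a₀ * aL γ) * cR γ = aL (a₀*γ) * cR (a₀*γ) := by
        rw [← hL']; nth_rewrite 3 [hL]; group
      obtain ⟨ea, _⟩ := uniq_dec A C hAC (A.mul_mem ha₀A haL) haL' hcR hcR' e2
      rw [hsA, hsA, ← ec, ← ea]; group
    · obtain ⟨hcL', haR', hR'⟩ := hdecR (γ * a₀) hmem2
      obtain ⟨haL', hcR', hL'⟩ := hdecL (γ * a₀) hmem2
      have e1 : cL γ * (aR γ * a₀) = cL (γ*a₀) * aR (γ*a₀) := by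
        rw [← hR']; nth_rewrite 3 [hR]; group
      obtain ⟨ec, _⟩ := uniq_dec C A (by rw [inf_comm]; exact hAC) hcL hcL'
        (A.mul_mem haR ha₀A) haR' e1
      have e2 : (aL γ * a₀) * (a₀⁻¹ * cR γ * a₀) = aL (γ*a₀) * cR (γ*a₀) := by
        rw [← hL']; nth_rewrite 3 [hL]; group
      obtain ⟨ea, _⟩ := uniq_dec A C hAC (A.mul_mem haL ha₀A) haL' (hconj' _ hcR) hcR' e2
      rw [hsA, hsA, ← ec, ← ea]; group
end

section
/- Let G be a group, A, C subgroups with A ∩ C = {1}, Γ := (A*C) ∩ (C*A), and A₀ := A ∩ N(C). Then for every a ∈ A₀ and all γ₁, γ₂, γ₃ ∈ Γ, the following two conditions are equivalent: (i) c_R(γ₁) = c_L(γ₂) and γ₃ * a = γ₁ * a_R(γ₂); (ii) c_R(γ₁) = c_L(γ₂ * a⁻¹) and γ₃ = γ₁ * a_R(γ₂ * a⁻¹). (Note γ₂ * a⁻¹ ∈ Γ since multiplication by A₀ preserves Γ.) This expresses the relation equality δ_A ∘ R_a = (id × R_a) ∘ δ_A of Proposition 2.2(3). -/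
/-- Proposition 2.2 (3): the relation equality `δ_A ∘ R_a = (id × R_a) ∘ δ_A`, stated
pointwise: for `a ∈ A₀ = A ∩ N(C)` and `γ₁, γ₂, γ₃ ∈ Γ = (A*C) ∩ (C*A)`, the conditions
`c_R(γ₁) = c_L(γ₂) ∧ γ₃ * a = γ₁ * a_R(γ₂)` and
`c_R(γ₁) = c_L(γ₂ * a⁻¹) ∧ γ₃ = γ₁ * a_R(γ₂ * a⁻¹)` are equivalent. -/
theorem stmt2 {G : Type*} [Group G] (A C : Subgroup G)
    (hAC : A ⊓ C = ⊥)
    (Γ : Set G)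
    (hΓ : Γ = {g | ∃ a ∈ A, ∃ c ∈ C, g = a * c} ∩ {g | ∃ c ∈ C, ∃ a ∈ A, g = c * a})
    (aL aR cL cR : G → G)
    (hdecL : ∀ γ ∈ Γ, aL γ ∈ A ∧ cR γ ∈ C ∧ γ = aL γ * cR γ)
    (hdecR : ∀ γ ∈ Γ, cL γ ∈ C ∧ aR γ ∈ A ∧ γ = cL γ * aR γ) :
    ∀ a ∈ A ⊓ Subgroup.normalizer (C : Set G), ∀ γ₁ ∈ Γ, ∀ γ₂ ∈ Γ, ∀ γ₃ ∈ Γ,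
      ((cR γ₁ = cL γ₂ ∧ γ₃ * a = γ₁ * aR γ₂) ↔
       (cR γ₁ = cL (γ₂ * a⁻¹) ∧ γ₃ = γ₁ * aR (γ₂ * a⁻¹))) := by
  intro a ha γ₁ h₁ γ₂ h₂ γ₃ h₃
  obtain ⟨haA, haN⟩ := ha
  -- γ₂ * a⁻¹ ∈ Γ
  have hmem : γ₂ * a⁻¹ ∈ Γ := by
    rw [hΓ] at h₂ ⊢
    obtain ⟨⟨a1, ha1, c1, hc1, e1⟩, ⟨c2, hc2, a2, ha2, e2⟩⟩ := h₂
    refine ⟨⟨a1 * a⁻¹, mul_mem ha1 (inv_mem haA), a * c1 * a⁻¹, ?_, ?_⟩,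
      ⟨c2, hc2, a2 * a⁻¹, mul_mem ha2 (inv_mem haA), ?_⟩⟩
    · have := Subgroup.mem_normalizer_iff.mp haN c1
      exact this.mp hc1
    · rw [e1]; group
    · rw [e2]; group
  obtain ⟨hc2C, ha2A, e2⟩ := hdecR γ₂ h₂
  obtain ⟨hc2C', ha2A', e2'⟩ := hdecR (γ₂ * a⁻¹) hmem
  have hthis : cL γ₂ * (aR γ₂ * a⁻¹) = cL (γ₂ * a⁻¹) * aR (γ₂ * a⁻¹) := by
    rw [← mul_assoc, ← e2]; exact e2'
  have key : (cL γ₂)⁻¹ * cL (γ₂ * a⁻¹) = 1 := by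
    have hx : (cL γ₂)⁻¹ * cL (γ₂ * a⁻¹) = (aR γ₂ * a⁻¹) * (aR (γ₂ * a⁻¹))⁻¹ := by
      rw [inv_mul_eq_iff_eq_mul, ← mul_assoc, hthis, mul_assoc, mul_inv_cancel, mul_one]
    have hmemA : (cL γ₂)⁻¹ * cL (γ₂ * a⁻¹) ∈ A := by
      rw [hx]; exact mul_mem (mul_mem ha2A (inv_mem haA)) (inv_mem ha2A')
    have hmemC : (cL γ₂)⁻¹ * cL (γ₂ * a⁻¹) ∈ C := mul_mem (inv_mem hc2C) hc2C'
    have : (cL γ₂)⁻¹ * cL (γ₂ * a⁻¹) ∈ A ⊓ C := ⟨hmemA, hmemC⟩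
    rw [hAC] at this
    exact this
  have hcL : cL (γ₂ * a⁻¹) = cL γ₂ := by
    have := mul_eq_one_iff_inv_eq.mp key
    rw [inv_inv] at this
    exact this.symm
  have haR : aR (γ₂ * a⁻¹) = aR γ₂ * a⁻¹ := by
    refine mul_left_cancel (a := cL γ₂) ?_
    calc cL γ₂ * aR (γ₂ * a⁻¹) = cL (γ₂ * a⁻¹) * aR (γ₂ * a⁻¹) := by rw [hcL]
      _ = cL γ₂ * (aR γ₂ * a⁻¹) := by rw [← hthis]
  rw [hcL, haR]
  constructor
  · rintro ⟨h, h'⟩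
    exact ⟨h, by rw [← mul_assoc, ← h', mul_assoc, mul_inv_cancel, mul_one]⟩
  · rintro ⟨h, h'⟩
    refine ⟨h, ?_⟩
    rw [h', mul_assoc, mul_assoc, inv_mul_cancel, mul_one]
end

section
/- Let Γ and Z be sets, δ a relation from Γ to Γ × Γ that is coassociative, i.e. (id × δ) ∘ δ = (δ × id) ∘ δ, and let π : Γ → Z be a surjection with associated equivalence relation h := πᵀ ∘ π. Assume (id × h) ∘ δ ∘ πᵀ = δ ∘ πᵀ (as relations from Z to Γ × Γ). Define the relation δ_Z := (id × π) ∘ δ ∘ πᵀ from Z to Γ × Z. Then (δ × id) ∘ δ_Z = (id × δ_Z) ∘ δ_Z (as relations from Z to Γ × Γ × Z). -/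
/-- Equation (6): if `δ : Γ ⇸ Γ × Γ` is coassociative, `π : Γ → Z` is a surjection with
equivalence relation `h = πᵀ ∘ π` satisfying `(id × h) ∘ δ ∘ πᵀ = δ ∘ πᵀ` (hypothesis
`hinv`), then the relation `δ_Z := (id × π) ∘ δ ∘ πᵀ` satisfies
`(δ × id) ∘ δ_Z = (id × δ_Z) ∘ δ_Z`. -/
theorem stmt6 {Γ Z : Type*}
    (δ : Γ → Γ × Γ → Prop)
    (hcoassoc : ∀ γ g₁ g₂ g₃,
      (∃ b, δ γ (g₁, b) ∧ δ b (g₂, g₃)) ↔ (∃ a, δ γ (a, g₃) ∧ δ a (g₁, g₂)))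
    (π : Γ → Z) (hπ : Function.Surjective π)
    (hinv : ∀ (z : Z) (g₁ g₂ : Γ),
      (∃ γ g₂', π γ = z ∧ δ γ (g₁, g₂') ∧ π g₂' = π g₂) ↔
      (∃ γ, π γ = z ∧ δ γ (g₁, g₂)))
    (δZ : Z → Γ × Z → Prop)
    (hδZ : ∀ (z : Z) (g : Γ) (w : Z),
      δZ z (g, w) ↔ ∃ γ g₂, π γ = z ∧ δ γ (g, g₂) ∧ π g₂ = w) :
    ∀ (z : Z) (g₁ g₂ : Γ) (w : Z),
      (∃ a, δZ z (a, w) ∧ δ a (g₁, g₂)) ↔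
      (∃ z', δZ z (g₁, z') ∧ δZ z' (g₂, w)) := by
  intro z g₁ g₂ w
  constructor
  · rintro ⟨a, hz, ha⟩
    rw [hδZ] at hz
    obtain ⟨γ, b, hγz, hγ, hbw⟩ := hz
    obtain ⟨b', hb'1, hb'2⟩ := (hcoassoc γ g₁ g₂ b).mpr ⟨a, hγ, ha⟩
    exact ⟨π b', (hδZ _ _ _).mpr ⟨γ, b', hγz, hb'1, rfl⟩,
      (hδZ _ _ _).mpr ⟨b', b, rfl, hb'2, hbw⟩⟩
  · rintro ⟨z', hz1, hz2⟩
    rw [hδZ] at hz1 hz2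
    obtain ⟨γ, c, hγz, hγ, hcz'⟩ := hz1
    obtain ⟨γ', d, hγ'z', hγ', hdw⟩ := hz2
    obtain ⟨γ₁, hγ₁z, hγ₁⟩ := (hinv z g₁ γ').mp ⟨γ, c, hγz, hγ, by rw [hcz', hγ'z']⟩
    obtain ⟨a, ha1, ha2⟩ := (hcoassoc γ₁ g₁ g₂ d).mp ⟨γ', hγ₁, hγ'⟩
    exact ⟨a, (hδZ _ _ _).mpr ⟨γ₁, d, hγ₁z, ha1, hdw⟩, ha2⟩
end

section
/- Let Γ be a groupoid (a category in which every morphism is invertible) and Φ a group acting on Γ by automorphisms: a group homomorphism φ ↦ F_φ into invertible functors Γ → Γ (bijective on objects and on morphisms). Assume condition (7): for every φ ∈ Φ and every object e, if F_φ(e) = e then F_φ fixes every morphism whose source or target is e. Then the multiplication induced on Φ-orbits of morphisms is well defined: for all morphisms f : a ⟶ b and g : b ⟶ c of Γ and all φ, ψ ∈ Φ such that F_φ(f) and F_ψ(g) are composable (i.e. F_φ(b) = F_ψ(b)), there exists χ ∈ Φ with F_χ(f ≫ g) = F_φ(f) ≫ F_ψ(g). -/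
open CategoryTheory

private lemma mapCongrAux {C D : Type*} [Category C] [Category D] (G : C ⥤ D)
    {x x' y y' : C} (hx : x = x') (hy : y = y')
    {f : x ⟶ y} {f' : x' ⟶ y'} (hf : HEq f f') : HEq (G.map f) (G.map f') := by
  subst hx; subst hy; cases hf; rfl

private lemma compCongrAux {C : Type*} [Category C]
    {x x' y y' z z' : C} (hx : x = x') (hy : y = y') (hz : z = z')
    {f : x ⟶ y} {f' : x' ⟶ y'} {g : y ⟶ z} {g' : y' ⟶ z'}
    (hf : HEq f f') (hg : HEq g g') : HEq (f ≫ g) (f' ≫ g') := by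
  subst hx; subst hy; subst hz; cases hf; cases hg; rfl

private lemma eqToHomMidAux {C : Type*} [Category C]
    {x x' y y' z : C} (hx : x = x') (hy : y = y')
    (f : x ⟶ y) (f' : x' ⟶ y') (g : y' ⟶ z) (hf : HEq f f') :
    HEq (f ≫ eqToHom hy ≫ g) (f' ≫ g) := by
  subst hx; subst hy; cases hf; apply heq_of_eq; simp

/-- Proposition 2.5 (key step): for a group `Φ` acting by automorphisms on a groupoid `Γ`
and satisfying condition (7) (if `F_φ` fixes an object `e`, it fixes every morphism with
source or target `e`), the multiplication induced on `Φ`-orbits of morphisms is well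
defined: whenever `F_φ(f)` and `F_ψ(g)` are composable, their composite lies in the orbit
of `f ≫ g`, i.e. there is `χ ∈ Φ` with `F_χ(f ≫ g) = F_φ(f) ≫ F_ψ(g)`. -/
theorem stmt7 {Γ : Type*} [Groupoid Γ] {Φ : Type*} [Group Φ]
    (F : Φ → Γ ⥤ Γ)
    (hone : F 1 = Functor.id Γ)
    (hmul : ∀ φ ψ : Φ, F (φ * ψ) = F ψ ⋙ F φ)
    (hobj : ∀ φ : Φ, Function.Bijective (F φ).obj)
    (hmap : ∀ (φ : Φ) (a b : Γ), Function.Bijective (fun f : a ⟶ b => (F φ).map f))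
    (cond7 : ∀ (φ : Φ) (e : Γ), (F φ).obj e = e →
      ∀ (a b : Γ) (f : a ⟶ b), a = e ∨ b = e →
        (F φ).obj a = a ∧ (F φ).obj b = b ∧ HEq ((F φ).map f) f) :
    ∀ (a b c : Γ) (f : a ⟶ b) (g : b ⟶ c) (φ ψ : Φ)
      (hb : (F φ).obj b = (F ψ).obj b),
      ∃ χ : Φ, (F χ).obj a = (F φ).obj a ∧ (F χ).obj c = (F ψ).obj c ∧
        HEq ((F χ).map (f ≫ g)) ((F φ).map f ≫ eqToHom hb ≫ (F ψ).map g) := by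
  intro a b c f g φ ψ hb
  set θ : Φ := ψ⁻¹ * φ with hθ
  -- F θ fixes b
  have hθb : (F θ).obj b = b := by
    have h1 : F θ = F φ ⋙ F ψ⁻¹ := hmul ψ⁻¹ φ
    have h2 : F (ψ⁻¹ * ψ) = F ψ ⋙ F ψ⁻¹ := hmul ψ⁻¹ ψ
    rw [inv_mul_cancel, hone] at h2
    calc (F θ).obj b = (F ψ⁻¹).obj ((F φ).obj b) := by rw [h1]; rfl
      _ = (F ψ⁻¹).obj ((F ψ).obj b) := by rw [hb]
      _ = (F ψ ⋙ F ψ⁻¹).obj b := rfl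
      _ = b := by rw [← h2]; rfl
  obtain ⟨hθa, hθb', hθf⟩ := cond7 θ b hθb a b f (Or.inr rfl)
  obtain ⟨_, hθc, hθg⟩ := cond7 θ b hθb b c g (Or.inl rfl)
  have hψθ : F φ = F θ ⋙ F ψ := by
    have := hmul ψ θ
    rw [hθ, mul_inv_cancel_left] at this
    exact this
  have hφa : (F φ).obj a = (F ψ).obj a := by
    rw [hψθ]; show (F ψ).obj ((F θ).obj a) = _; rw [hθa]
  have hφc : (F φ).obj c = (F ψ).obj c := by
    rw [hψθ]; show (F ψ).obj ((F θ).obj c) = _; rw [hθc]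
  have hφf : HEq ((F φ).map f) ((F ψ).map f) := by
    have h0 : HEq ((F φ).map f) ((F ψ).map ((F θ).map f)) := by rw [hψθ]; rfl
    exact h0.trans (mapCongrAux (F ψ) hθa hθb' hθf)
  have hL : HEq ((F φ).map (f ≫ g)) ((F ψ).map f ≫ (F ψ).map g) := by
    have h0 : HEq ((F φ).map (f ≫ g)) ((F ψ).map ((F θ).map (f ≫ g))) := by rw [hψθ]; rfl
    have hcomp : HEq ((F θ).map (f ≫ g)) (f ≫ g) := by
      rw [(F θ).map_comp]
      exact compCongrAux hθa hθb' hθc hθf hθg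
    refine (h0.trans (mapCongrAux (F ψ) hθa hθc hcomp)).trans ?_
    rw [(F ψ).map_comp]
  exact ⟨φ, rfl, hφc, hL.trans (eqToHomMidAux hφa hb _ _ _ hφf).symm⟩
end

section
/- Let Γ be a groupoid (a category in which every morphism is invertible) and Φ a group acting on Γ by automorphisms, via φ ↦ F_φ. The following conditions are equivalent: (1) for every φ ∈ Φ and every object e with F_φ(e) = e, F_φ fixes every morphism whose source or target is e; (2) for every φ ∈ Φ and every object e with F_φ(e) = e, F_φ fixes every morphism with target e; (3) for every φ ∈ Φ and every object e with F_φ(e) = e, F_φ fixes every morphism with source e; (4) any two morphisms γ, γ' lying in the same transitive component of Γ (i.e. whose sources are connected by a morphism of Γ) have equal isotropy groups {φ ∈ Φ : F_φ(γ) = γ} = {φ ∈ Φ : F_φ(γ') = γ'}. -/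
open CategoryTheory

/-- `FixesHom F f` means the endofunctor `F` fixes the morphism `f` (as an element of the
disjoint union of all hom-sets): it fixes its source, its target, and `f` itself. -/
def FixesHom {Γ : Type*} [Groupoid Γ] (F : Γ ⥤ Γ) {a b : Γ} (f : a ⟶ b) : Prop :=
  F.obj a = a ∧ F.obj b = b ∧ HEq (F.map f) f

lemma fixesHom_inv {Γ : Type*} [Groupoid Γ] (F : Γ ⥤ Γ) {a b : Γ} (f : a ⟶ b)
    (h : FixesHom F f) : FixesHom F (Groupoid.inv f) := by
  obtain ⟨ha, hb, hf⟩ := h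
  refine ⟨hb, ha, ?_⟩
  rw [← conj_eqToHom_iff_heq _ _ ha hb] at hf
  rw [← conj_eqToHom_iff_heq _ _ hb ha]
  simp only [Groupoid.inv_eq_inv, Functor.map_inv, hf]
  simp

/-- Lemma 2.6: for a group `Φ` acting by automorphisms on a groupoid `Γ`, the following
are equivalent: (1) if `F_φ` fixes an object `e`, it fixes every morphism with source or
target `e`; (2) the same with "target `e`"; (3) the same with "source `e`"; (4) any two
morphisms lying in the same transitive component (sources connected by a morphism) have
equal isotropy groups in `Φ`. -/
theorem stmt8 {Γ : Type*} [Groupoid Γ] {Φ : Type*} [Group Φ]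
    (F : Φ → Γ ⥤ Γ)
    (hone : F 1 = Functor.id Γ)
    (hmul : ∀ φ ψ : Φ, F (φ * ψ) = F ψ ⋙ F φ)
    (hobj : ∀ φ : Φ, Function.Bijective (F φ).obj)
    (hmap : ∀ (φ : Φ) (a b : Γ), Function.Bijective (fun f : a ⟶ b => (F φ).map f)) :
    List.TFAE [
      ∀ (φ : Φ) (e : Γ), (F φ).obj e = e →
        ∀ (a b : Γ) (f : a ⟶ b), a = e ∨ b = e → FixesHom (F φ) f,
      ∀ (φ : Φ) (e : Γ), (F φ).obj e = e →
        ∀ (a : Γ) (f : a ⟶ e), FixesHom (F φ) f,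
      ∀ (φ : Φ) (e : Γ), (F φ).obj e = e →
        ∀ (b : Γ) (f : e ⟶ b), FixesHom (F φ) f,
      ∀ (a b a' b' : Γ) (f : a ⟶ b) (f' : a' ⟶ b'), Nonempty (a ⟶ a') →
        ∀ φ : Φ, (FixesHom (F φ) f ↔ FixesHom (F φ) f')] := by
  tfae_have 1 → 2 := by
    intro h φ e he a f
    exact h φ e he a e f (Or.inr rfl)
  tfae_have 2 → 3 := by
    intro h φ e he b f
    have := fixesHom_inv (F φ) _ (h φ e he b (Groupoid.inv f))
    simpa using this
  tfae_have 3 → 4 := by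
    intro h a b a' b' f f' ⟨g⟩ φ
    constructor
    · rintro ⟨ha, -, -⟩
      have hg := h φ a ha a' g
      exact h φ a' hg.2.1 b' f'
    · rintro ⟨ha', -, -⟩
      have hg := h φ a' ha' a (Groupoid.inv g)
      exact h φ a hg.2.1 b f
  tfae_have 4 → 1 := by
    intro h φ e he a b f hae
    have hne : Nonempty (a ⟶ e) := by
      rcases hae with rfl | rfl
      · exact ⟨𝟙 a⟩
      · exact ⟨f⟩
    exact (h a b e e f (𝟙 e) hne φ).mpr ⟨he, he, by rw [(F φ).map_id, ← conj_eqToHom_iff_heq _ _ he he]; simp⟩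
  tfae_finish
end

section
/- For x, ẋ ∈ ℝⁿ (with the Euclidean norm) and s > 0, define the map ŝ(x, ẋ, s) := (x', ẋ', s') where x' := s·x − (2/(1+‖x‖²))·ẋ, ẋ' := −((1+‖x'‖²)/((1+‖x‖²)·s))·ẋ, and s' := 1/s. Then ŝ is an involution: ŝ(ŝ(x, ẋ, s)) = (x, ẋ, s) for all x, ẋ ∈ ℝⁿ and s > 0. -/
/-- The groupoid inverse `ŝ` of formula (27), in stereographic coordinates on
`Z₁ = ℝⁿ × ℝⁿ × ℝ₊`. -/
noncomputable def sHat {n : ℕ}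
    (z : EuclideanSpace ℝ (Fin n) × EuclideanSpace ℝ (Fin n) × ℝ) :
    EuclideanSpace ℝ (Fin n) × EuclideanSpace ℝ (Fin n) × ℝ :=
  let x := z.1
  let v := z.2.1
  let s := z.2.2
  let x' := s • x - (2 / (1 + ‖x‖ ^ 2)) • v
  (x', -((1 + ‖x'‖ ^ 2) / ((1 + ‖x‖ ^ 2) * s)) • v, 1 / s)

/-- The map `ŝ` of formula (27) is an involution on `Z₁ = ℝⁿ × ℝⁿ × ℝ₊`. -/
theorem stmt9 {n : ℕ} (x v : EuclideanSpace ℝ (Fin n)) (s : ℝ) (hs : 0 < s) :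
    sHat (sHat (x, v, s)) = (x, v, s) := by
  have ha : (1 : ℝ) + ‖x‖ ^ 2 ≠ 0 := by positivity
  have hs' : s ≠ 0 := hs.ne'
  simp only [sHat]
  set a := 1 + ‖x‖ ^ 2 with hA
  set x' := s • x - (2 / a) • v with hx'
  have hb : (1 : ℝ) + ‖x'‖ ^ 2 ≠ 0 := by positivity
  set b := 1 + ‖x'‖ ^ 2 with hB
  have hxx : (1/s) • x' - (2 / b) • (-(b / (a * s)) • v) = x := by
    rw [hx']; match_scalars <;> (field_simp; try ring)
  rw [hxx]
  refine Prod.ext rfl (Prod.ext ?_ ?_)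
  · show -((1 + ‖x‖ ^ 2) / (b * (1/s))) • (-(b / (a * s)) • v) = v
    rw [← hA, smul_smul]
    rw [show -(a / (b * (1/s))) * -(b / (a * s)) = 1 by field_simp, one_smul]
  · show 1 / (1 / s) = s
    field_simp
end

section
/- Let p, v ∈ ℝ^{n+1} (with the standard Euclidean inner product) satisfy ‖p‖ = 1 and ⟨p, v⟩ = 0, and let s > 0. Write α for the last coordinate of p and r for the last coordinate of v. Then (1 − α)·(‖v‖² + 1) + (1 + α)·s² − 2·r·s > 0. (Equivalently, the quantity M of the paper, M := (1/(2s²))·[(1−α)(‖v‖²+1) + (1+α)s² − 2rs], is strictly positive on TSⁿ × ℝ₊.) -/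
lemma key13 (a r V s : ℝ) (ha : a^2 ≤ 1) (hr : r^2 ≤ (1-a^2)*V^2) (hs : 0 < s) :
    0 < (1-a)*(V^2+1)+(1+a)*s^2 - 2*r*s := by
  rcases eq_or_lt_of_le ha with h | h
  · have hr0 : r = 0 := by nlinarith [sq_nonneg r]
    have h2 : (a-1)*(a+1) = 0 := by nlinarith
    rcases mul_eq_zero.mp h2 with h3 | h3
    · nlinarith [sq_nonneg V, mul_pos hs hs]
    · nlinarith [sq_nonneg V, mul_pos hs hs]
  · have ha1 : a < 1 := by nlinarith
    have ha2 : -1 < a := by nlinarith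
    have hA : 0 < (1-a)*(V^2+1) := by nlinarith [sq_nonneg V, mul_pos hs hs]
    have hB : 0 < (1+a)*s^2 := by nlinarith [sq_nonneg V, mul_pos hs hs]
    have hAB : (2*r*s)^2 < ((1-a)*(V^2+1)+(1+a)*s^2)^2 := by
      nlinarith [sq_nonneg ((1-a)*(V^2+1) - (1+a)*s^2), mul_pos hs hs]
    nlinarith [hAB, hA, hB]

/-- Positivity of the quantity `M` of formula (28): for `(p, v) ∈ TSⁿ` (so `‖p‖ = 1`,
`⟨p, v⟩ = 0`) and `s > 0`, writing `α` and `r` for the last coordinates of `p` and `v`,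
one has `(1 − α)(‖v‖² + 1) + (1 + α)s² − 2rs > 0`. -/
theorem stmt13 {n : ℕ} (p v : EuclideanSpace ℝ (Fin (n + 1))) (s : ℝ)
    (hp : ‖p‖ = 1) (hpv : (inner ℝ p v : ℝ) = 0) (hs : 0 < s) :
    0 < (1 - p (Fin.last n)) * (‖v‖ ^ 2 + 1) + (1 + p (Fin.last n)) * s ^ 2 -
        2 * v (Fin.last n) * s := by
  set i := Fin.last n
  set q : EuclideanSpace ℝ (Fin (n + 1)) :=
    EuclideanSpace.single i (1:ℝ) - (p i) • p with hq
  have hqv : (inner ℝ q v : ℝ) = v i := by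
    simp only [hq, inner_sub_left, real_inner_smul_left, hpv, EuclideanSpace.inner_single_left,
      conj_trivial, one_mul, mul_zero, sub_zero]
  have hpp : (inner ℝ p p : ℝ) = 1 := by
    rw [real_inner_self_eq_norm_sq, hp]; norm_num
  have hqq : (inner ℝ q q : ℝ) = 1 - (p i)^2 := by
    simp only [hq, inner_sub_left, inner_sub_right, real_inner_smul_left, real_inner_smul_right,
      EuclideanSpace.inner_single_left, EuclideanSpace.inner_single_right, hpp,
      conj_trivial, EuclideanSpace.single_apply, if_pos rfl, mul_one, one_mul, if_true,
      PiLp.smul_apply, smul_eq_mul]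
    ring
  have ha : (p i)^2 ≤ 1 := by
    have := real_inner_self_nonneg (x := q); rw [hqq] at this; linarith
  have hcs := real_inner_mul_inner_self_le q v
  rw [hqv, hqq, real_inner_self_eq_norm_sq] at hcs
  have hr : (v i)^2 ≤ (1 - (p i)^2) * ‖v‖^2 := by nlinarith [hcs]
  exact key13 (p i) (v i) ‖v‖ s ha hr hs
end
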